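/- In a partially additive field, summability (the relation 'a + b is defined') is an equivalence relation on Q. -/
import Mathlib


/-- A partially additive field: partial addition (modeled via `Option`, `none` = undefined),
total multiplication, per-element zeros, etc. -/
structure PAF (Q : Type*) where
  add : Q → Q → Option Q
  mul : Q → Q → Q
  zero : Q → Q
  one : Q
  neg : Q → Q
  inv : Q → Q
  add_comm : ∀ a b, add a b = add b a
  mul_comm : ∀ a b, mul a b = mul b a
  add_assoc : ∀ a b c, (add a b).bind (fun x => add x c) = (add b c).bind (fun x => add a x)
  mul_assoc : ∀ a b c, mul (mul a b) c = mul a (mul b c)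
  left_distrib : ∀ a b c, (add b c).map (mul a) = add (mul a b) (mul a c)
  add_zero : ∀ a, add a (zero a) = some a
  zero_unique : ∀ a z, add a z = some a → z = zero a
  mul_one : ∀ a, mul a one = a
  add_neg : ∀ a, add a (neg a) = some (zero a)
  mul_inv : ∀ a, (¬ ∃ b, a = zero b) → mul a (inv a) = one
  nontrivial : ∀ a b, a = zero b → ∃ c, (¬ ∃ d, c = zero d) ∧ a = zero c

namespace PAF
variable {Q : Type*} (F : PAF Q)

/-- `a` is a zero element. -/
def IsZero (a : Q) : Prop := ∃ b, a = F.zero b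

/-- `a` and `b` are summable (their sum is defined). -/
def Summable (a b : Q) : Prop := (F.add a b).isSome

/-- `a` is dimensionless iff it is summable with `1`. -/
def Dimensionless (a : Q) : Prop := F.Summable a F.one

/-- `n`-th power via the total multiplication. -/
def pow (a : Q) : ℕ → Q
  | 0 => F.one
  | n + 1 => F.mul a (pow a n)

end PAF


namespace PAF
variable {Q : Type*} (F : PAF Q)

lemma zmul (m c : Q) : F.mul m (F.zero c) = F.zero (F.mul m c) := by
  apply F.zero_unique
  have h := F.left_distrib m c (F.zero c)
  rw [F.add_zero] at h
  exact h.symm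

lemma zidem (x : Q) : F.add (F.zero x) (F.zero x) = some (F.zero x) := by
  have h := F.add_assoc x (F.zero x) (F.zero x)
  rw [F.add_zero] at h
  simp only [Option.bind_some, F.add_zero] at h
  cases hz : F.add (F.zero x) (F.zero x) with
  | none => rw [hz] at h; simp at h
  | some w =>
    rw [hz] at h
    simp only [Option.bind_some] at h
    have := F.zero_unique x w h.symm
    rw [this]

lemma zz (x : Q) : F.zero (F.zero x) = F.zero x :=
  (F.zero_unique (F.zero x) (F.zero x) (F.zidem x)).symm

lemma zeq_of_add {a b s : Q} (h : F.add a b = some s) :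
    F.zero a = F.zero s ∧ F.zero b = F.zero s := by
  have hd := F.left_distrib (F.zero F.one) a b
  rw [h] at hd
  have e : ∀ x : Q, F.mul (F.zero F.one) x = F.zero x := by
    intro x
    rw [F.mul_comm, F.zmul, F.mul_one]
  rw [e a, e b] at hd
  simp only [Option.map_some, e s] at hd
  -- hd : some (zero s) = add (zero a) (zero b)
  constructor
  · -- use add_assoc (zero b) (zero a) (zero a)
    have h2 := F.add_assoc (F.zero b) (F.zero a) (F.zero a)
    rw [F.add_comm (F.zero b) (F.zero a), ← hd, F.zidem] at h2
    simp only [Option.bind_some] at h2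
    rw [F.add_comm (F.zero b) (F.zero a), ← hd] at h2
    -- h2 : add (zero s) (zero a) = some (zero s)
    have := F.zero_unique (F.zero s) (F.zero a) h2
    rw [this, F.zz]
  · have h2 := F.add_assoc (F.zero a) (F.zero b) (F.zero b)
    rw [← hd, F.zidem] at h2
    simp only [Option.bind_some] at h2
    rw [← hd] at h2
    have := F.zero_unique (F.zero s) (F.zero b) h2
    rw [this, F.zz]

lemma summable_iff (a b : Q) : F.Summable a b ↔ F.zero a = F.zero b := by
  constructor
  · intro h
    rw [Summable, Option.isSome_iff_exists] at h
    obtain ⟨s, hs⟩ := h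
    obtain ⟨h1, h2⟩ := F.zeq_of_add hs
    rw [h1, h2]
  · intro h
    have ha := F.add_assoc a b (F.neg b)
    rw [F.add_neg, ← h, Option.bind_some, F.add_zero] at ha
    rw [Summable]
    cases hab : F.add a b with
    | none => rw [hab] at ha; simp at ha
    | some s => simp

end PAF

/-- Summability is an equivalence relation on a partially additive field. -/
theorem summable_equivalence {Q : Type*} (F : PAF Q) :
    Equivalence F.Summable := by
  constructor
  · intro a; rw [F.summable_iff]
  · intro a b h; rw [F.summable_iff] at *; exact h.symm
  · intro a b c h1 h2; rw [F.summable_iff] at *; exact h1.trans h2
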